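/- Let a ∈ ℝ⁴₁ (Minkowski space with signature (+,+,+,−)) and let γ : I → H³ be a unit-speed curve satisfying γ''(s) − γ(s) = q · (V(γ(s)) ×_{H³} γ'(s)) where V(p) = a + ⟨a,p⟩p. Then f(s) = ⟨γ(s), a⟩ satisfies f'' − f = 0, so f(s) = a₁ cosh s + a₂ sinh s for constants a₁, a₂. -/

import Mathlib

/-- Lorentzian inner product on `ℝ⁴₁` with signature `(+,+,+,-)`. -/
def ldot (u v : Fin 4 → ℝ) : ℝ := u 0 * v 0 + u 1 * v 1 + u 2 * v 2 - u 3 * v 3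

def det4 (u v w p : Fin 4 → ℝ) : ℝ := (Matrix.of ![u, v, w, p]).det

lemma const_of_deriv_zero' (I : Set ℝ) (hI : IsOpen I) (hconv : Convex ℝ I)
    (F : ℝ → ℝ) (hF : ∀ s ∈ I, HasDerivAt F 0 s) :
    ∀ s ∈ I, ∀ t ∈ I, F s = F t := by
  intro s hs t ht
  apply hconv.is_const_of_fderivWithin_eq_zero
    (fun z hz => ((hF z hz).differentiableAt.differentiableWithinAt)) _ hs ht
  intro z hz
  have h0 : HasFDerivAt F (0 : ℝ →L[ℝ] ℝ) z := by
    exact (hF z hz).hasFDerivAt.congr_fderiv (by ext; simp)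
  exact h0.hasFDerivWithinAt.fderivWithin (hI.uniqueDiffOn z hz)

lemma det4_repeat (u g p : Fin 4 → ℝ) : det4 u g u p = 0 := by
  apply Matrix.det_zero_of_row_eq (i := 0) (j := 2) (by decide)
  rfl

/-- For a unit-speed conformal trajectory on `H³` of `V(p) = a + ⟨a,p⟩p`,
the function `f(s) = ⟨γ(s), a⟩` satisfies `f'' - f = 0`, hence
`f(s) = a₁ cosh s + a₂ sinh s`. -/
theorem stmt12 (I : Set ℝ) (hI : IsOpen I) (hconv : Convex ℝ I)
    (a : Fin 4 → ℝ) (q : ℝ)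
    (γ g g' X : ℝ → (Fin 4 → ℝ))
    (hd1 : ∀ s ∈ I, HasDerivAt γ (g s) s)
    (hd2 : ∀ s ∈ I, HasDerivAt g (g' s) s)
    (hhyp : ∀ s ∈ I, ldot (γ s) (γ s) = -1 ∧ 0 < γ s 3)
    (hunit : ∀ s ∈ I, ldot (g s) (g s) = 1)
    (hXt : ∀ s ∈ I, ldot (X s) (γ s) = 0)
    (hX : ∀ s ∈ I, ∀ w, ldot w (γ s) = 0 →
      ldot (X s) w = det4 (a + ldot a (γ s) • γ s) (g s) w (γ s))
    (heq : ∀ s ∈ I, g' s - γ s = q • X s) :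
    (∀ s ∈ I, ldot (g' s) a - ldot (γ s) a = 0) ∧
    ∃ a₁ a₂ : ℝ, ∀ s ∈ I, ldot (γ s) a = a₁ * Real.cosh s + a₂ * Real.sinh s := by
  -- X is ldot-orthogonal to a
  have hXa : ∀ s ∈ I, ldot (X s) a = 0 := by
    intro s hs
    have h1 := (hhyp s hs).1
    have hw : ldot (a + ldot a (γ s) • γ s) (γ s) = 0 := by
      simp only [ldot, Pi.add_apply, Pi.smul_apply, smul_eq_mul] at h1 ⊢
      linear_combination (a 0 * γ s 0 + a 1 * γ s 1 + a 2 * γ s 2 - a 3 * γ s 3) * h1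
    have hdet := hX s hs (a + ldot a (γ s) • γ s) hw
    rw [det4_repeat] at hdet
    have hXγ := hXt s hs
    simp only [ldot, Pi.add_apply, Pi.smul_apply, smul_eq_mul] at hdet hXγ ⊢
    linear_combination hdet - (a 0 * γ s 0 + a 1 * γ s 1 + a 2 * γ s 2 - a 3 * γ s 3) * hXγ
  have hpart1 : ∀ s ∈ I, ldot (g' s) a - ldot (γ s) a = 0 := by
    intro s hs
    have h := heq s hs
    have h0 : ∀ i, g' s i - γ s i = q * X s i := fun i => by
      simpa using congrFun h i
    have hXa' := hXa s hs
    simp only [ldot] at hXa' ⊢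
    linear_combination a 0 * h0 0 + a 1 * h0 1 + a 2 * h0 2 - a 3 * h0 3 + q * hXa'
  refine ⟨hpart1, ?_⟩
  -- derivatives of f and f'
  have hdf : ∀ (v v' : ℝ → (Fin 4 → ℝ)), (∀ s ∈ I, HasDerivAt v (v' s) s) →
      ∀ s ∈ I, HasDerivAt (fun t => ldot (v t) a) (ldot (v' s) a) s := by
    intro v v' hv s hs
    have hc : ∀ i : Fin 4, HasDerivAt (fun t => v t i) (v' s i) s := fun i =>
      ((ContinuousLinearMap.proj i : (Fin 4 → ℝ) →L[ℝ] ℝ).hasFDerivAt).comp_hasDerivAt s (hv s hs)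
    simp only [ldot]
    exact ((((hc 0).mul_const (a 0)).add ((hc 1).mul_const (a 1))).add
      ((hc 2).mul_const (a 2))).sub ((hc 3).mul_const (a 3))
  by_cases hne : ∃ s₀, s₀ ∈ I
  · obtain ⟨s₀, hs₀⟩ := hne
    set c1 := ldot (γ s₀) a with hc1
    set c2 := ldot (g s₀) a with hc2
    set A₁ := c1 * Real.cosh s₀ - c2 * Real.sinh s₀ with hA1
    set A₂ := c2 * Real.cosh s₀ - c1 * Real.sinh s₀ with hA2
    refine ⟨A₁, A₂, ?_⟩
    set P : ℝ → ℝ := fun t => ldot (γ t) a - (A₁ * Real.cosh t + A₂ * Real.sinh t) with hP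
    set P' : ℝ → ℝ := fun t => ldot (g t) a - (A₁ * Real.sinh t + A₂ * Real.cosh t) with hP'
    have hdP : ∀ s ∈ I, HasDerivAt P (P' s) s := by
      intro s hs
      exact (hdf γ g hd1 s hs).sub (((Real.hasDerivAt_cosh s).const_mul A₁).add
        ((Real.hasDerivAt_sinh s).const_mul A₂))
    have hdP' : ∀ s ∈ I, HasDerivAt P' (P s) s := by
      intro s hs
      have h := (hdf g g' hd2 s hs).sub (((Real.hasDerivAt_sinh s).const_mul A₁).add
        ((Real.hasDerivAt_cosh s).const_mul A₂))
      refine h.congr_deriv ?_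
      have := hpart1 s hs
      simp only [hP]; linarith
    have hch : Real.cosh s₀ ^ 2 - Real.sinh s₀ ^ 2 = 1 := Real.cosh_sq_sub_sinh_sq s₀
    have hP0 : P s₀ = 0 := by
      simp only [hP, hA1, hA2, hc1, hc2]
      linear_combination (-(ldot (γ s₀) a)) * hch
    have hP'0 : P' s₀ = 0 := by
      simp only [hP', hA1, hA2, hc1, hc2]
      linear_combination (-(ldot (g s₀) a)) * hch
    -- Q = exp(-t) * (P' + P) is constant, equal to 0
    have hQ : ∀ s ∈ I, P' s + P s = 0 := by
      intro s hs
      have hconst := const_of_deriv_zero' I hI hconv (fun t => Real.exp (-t) * (P' t + P t))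
        (fun z hz => by
          have hexp : HasDerivAt (fun t => Real.exp (-t)) (-Real.exp (-z)) z := by
            have h := (Real.hasDerivAt_exp (-z)).comp z (hasDerivAt_neg z)
            simp only [mul_neg, mul_one] at h
            exact h
          have := hexp.mul ((hdP' z hz).add (hdP z hz))
          refine this.congr_deriv ?_; simp only [Pi.add_apply]; ring) s hs s₀ hs₀
      have h2 : Real.exp (-s) * (P' s + P s) = Real.exp (-s₀) * (P' s₀ + P s₀) := hconst
      rw [hP0, hP'0] at h2
      have hepos := (Real.exp_pos (-s)).ne'
      rcases mul_eq_zero.mp (by linarith : Real.exp (-s) * (P' s + P s) = 0) with h | h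
      · exact absurd h hepos
      · exact h
    -- R = exp(t) * P is constant, equal to 0
    intro s hs
    have hconst := const_of_deriv_zero' I hI hconv (fun t => Real.exp t * P t)
      (fun z hz => by
        have := (Real.hasDerivAt_exp z).mul (hdP z hz)
        refine this.congr_deriv ?_
        have hq := hQ z hz
        linear_combination (Real.exp z) * hq) s hs s₀ hs₀
    have h2 : Real.exp s * P s = Real.exp s₀ * P s₀ := hconst
    rw [hP0] at h2
    have hPz : P s = 0 := by
      rcases mul_eq_zero.mp (by linarith : Real.exp s * P s = 0) with h | h
      · exact absurd h (Real.exp_pos s).ne'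
      · exact h
    simp only [hP] at hPz
    linarith
  · exact ⟨0, 0, fun s hs => absurd ⟨s, hs⟩ hne⟩
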